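/- Under Ψ, the hyperbolic one-parameter subgroup t ↦ diag(eᵗ, e⁻ᵗ) of SL(2,ℝ) maps to [sinh t : 0 : 0 : cosh t - 1 : cosh t + 1], which in the affine Minkowski chart corresponds to the segment of the x-axis with x = tanh(t/2), and t ↦ -diag(eᵗ,e⁻ᵗ) maps to [sinh t : 0 : 0 : cosh t + 1 : cosh t - 1], corresponding to x = coth(t/2); in particular tanh(t/2)·coth(t/2) = 1 and the two images are swapped by the involution [X:Y:Z:U:V] ↦ [X:Y:Z:V:U]. -/

import Mathlib

open Matrix Real

/-- The map `Ψ` in homogeneous coordinates: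
`[[a,b],[c,d]] ↦ (a-d, b+c, b-c, a+d-2, a+d+2)`. -/
def psiVec (M : Matrix (Fin 2) (Fin 2) ℝ) : Fin 5 → ℝ :=
  ![M 0 0 - M 1 1, M 0 1 + M 1 0, M 0 1 - M 1 0, M 0 0 + M 1 1 - 2, M 0 0 + M 1 1 + 2]

/-- The involution `I_S : [X:Y:Z:U:V] ↦ [X:Y:Z:V:U]` on homogeneous coordinates. -/
def swapUV (v : Fin 5 → ℝ) : Fin 5 → ℝ := ![v 0, v 1, v 2, v 4, v 3]

set_option maxHeartbeats 1000000 in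
/-- Under `Ψ`, `t ↦ diag(eᵗ, e⁻ᵗ)` maps to `[sinh t : 0 : 0 : cosh t - 1 : cosh t + 1]`,
which in the affine Minkowski chart `(x,y,z) ↦ [x : y : z : x² + y² - z² : 1]` is the
`x`-axis segment `x = tanh(t/2)`; and `t ↦ -diag(eᵗ, e⁻ᵗ)` maps to
`[sinh t : 0 : 0 : cosh t + 1 : cosh t - 1]`, corresponding to `x = coth(t/2)`.
Moreover `tanh(t/2)·coth(t/2) = 1` and the two images are swapped by the involution
`[X:Y:Z:U:V] ↦ [X:Y:Z:V:U]`. -/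
theorem psi_hyperbolic_subgroup (t : ℝ) :
    (∃ c : ℝ, c ≠ 0 ∧
      psiVec !![exp t, 0; 0, exp (-t)] = c • ![sinh t, 0, 0, cosh t - 1, cosh t + 1]) ∧
    (∃ c : ℝ, c ≠ 0 ∧
      psiVec !![exp t, 0; 0, exp (-t)] =
        c • ![tanh (t / 2), 0, 0, tanh (t / 2) ^ 2 + 0 ^ 2 - 0 ^ 2, 1]) ∧
    (∃ c : ℝ, c ≠ 0 ∧
      psiVec (-!![exp t, 0; 0, exp (-t)]) =
        c • ![sinh t, 0, 0, cosh t + 1, cosh t - 1]) ∧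
    (t ≠ 0 →
      tanh (t / 2) * (cosh (t / 2) / sinh (t / 2)) = 1 ∧
      ∃ c : ℝ, c ≠ 0 ∧
        psiVec (-!![exp t, 0; 0, exp (-t)]) =
          c • ![cosh (t / 2) / sinh (t / 2), 0, 0,
                (cosh (t / 2) / sinh (t / 2)) ^ 2 + 0 ^ 2 - 0 ^ 2, 1]) ∧
    (∃ c : ℝ, c ≠ 0 ∧
      swapUV (psiVec !![exp t, 0; 0, exp (-t)]) =
        c • psiVec (-!![exp t, 0; 0, exp (-t)])) := by
  set c := Real.cosh (t / 2) with hcdef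
  set s := Real.sinh (t / 2) with hsdef
  have h1 : c ^ 2 - s ^ 2 = 1 := Real.cosh_sq_sub_sinh_sq (t / 2)
  have hcpos : (0:ℝ) < c := Real.cosh_pos _
  have hc : Real.cosh t = c ^ 2 + s ^ 2 := by
    have := Real.cosh_two_mul (t / 2)
    rw [show 2 * (t / 2) = t by ring] at this
    linarith [this, h1]
  have hs : Real.sinh t = 2 * s * c := by
    have := Real.sinh_two_mul (t / 2)
    rw [show 2 * (t / 2) = t by ring] at this
    rw [this]
  have he : rexp t = (c + s) ^ 2 := by
    have h2 : rexp t = Real.cosh t + Real.sinh t := by rw [Real.cosh_eq, Real.sinh_eq]; ring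
    rw [h2, hc, hs]; ring
  have he' : rexp (-t) = (c - s) ^ 2 := by
    have h2 : rexp (-t) = Real.cosh t - Real.sinh t := by rw [Real.cosh_eq, Real.sinh_eq]; ring
    rw [h2, hc, hs]; ring
  have htanh : Real.tanh (t / 2) = s / c := Real.tanh_eq_sinh_div_cosh _
  refine ⟨⟨2, by norm_num, ?_⟩, ⟨4 * c ^ 2, by positivity, ?_⟩,
    ⟨-2, by norm_num, ?_⟩, fun ht => ?_, ⟨-1, by norm_num, ?_⟩⟩
  · funext i; fin_cases i <;> simp [psiVec, he, he', hc, hs] <;> nlinarith [h1]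
  · funext i; fin_cases i <;> simp [psiVec, he, he', htanh] <;>
      (try field_simp) <;> nlinarith [h1]
  · funext i; fin_cases i <;> simp [psiVec, he, he', hc, hs] <;> nlinarith [h1]
  · have hsne : s ≠ 0 := by
      rw [hsdef, Real.sinh_ne_zero]
      exact fun h => ht (by linarith)
    constructor
    · rw [htanh]; field_simp
    · refine ⟨-4 * s ^ 2, by positivity, ?_⟩
      funext i; fin_cases i
      · simp [psiVec, he, he']; field_simp; ring
      · simp [psiVec]
      · simp [psiVec]
      · simp [psiVec, he, he']; field_simp; linear_combination 2 * h1
      · simp [psiVec, he, he']; linear_combination (-2) * h1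
  · funext i; fin_cases i <;> simp [psiVec, swapUV, he, he'] <;> ring
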